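/- The groups PSL(2, 𝔽_4) and A_5 are isomorphic, i.e. there exists a group isomorphism PSL(2, GaloisField 2 2) ≃ A_5. -/

import Mathlib

/-- The projective special linear group `PSL(n, F)`: the quotient of `SL(n, F)` by its center. -/
abbrev PSL (n : ℕ) (F : Type) [Field F] :=
  Matrix.SpecialLinearGroup (Fin n) F ⧸ Subgroup.center (Matrix.SpecialLinearGroup (Fin n) F)


set_option maxHeartbeats 1000000

/-- A concrete field with four elements. -/
inductive F4 : Type
  | z | o | a | b
deriving DecidableEq

namespace F4

instance : Fintype F4 := ⟨{z, o, a, b}, fun x => by cases x <;> decide⟩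

def add : F4 → F4 → F4
  | z, x => x
  | x, z => x
  | o, o => z | o, a => b | o, b => a
  | a, o => b | a, a => z | a, b => o
  | b, o => a | b, a => o | b, b => z

def mul : F4 → F4 → F4
  | z, _ => z
  | _, z => z
  | o, x => x
  | x, o => x
  | a, a => b | a, b => o
  | b, a => o | b, b => a

instance : Zero F4 := ⟨z⟩
instance : One F4 := ⟨o⟩
instance : Add F4 := ⟨add⟩
instance : Mul F4 := ⟨mul⟩
instance : Neg F4 := ⟨id⟩

instance : CommRing F4 where
  add_assoc := by decide
  zero_add := by decide
  add_zero := by decide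
  add_comm := by decide
  neg_add_cancel := by decide
  nsmul := nsmulRec
  zsmul := zsmulRec
  mul_assoc := by decide
  one_mul := by decide
  mul_one := by decide
  left_distrib := by decide
  right_distrib := by decide
  mul_comm := by decide
  zero_mul := by decide
  mul_zero := by decide

instance : Nontrivial F4 := ⟨z, o, by decide⟩

instance : NoZeroDivisors F4 where
  eq_zero_or_eq_zero_of_mul_eq_zero {x y} h := by revert h; revert x y; decide

instance : IsDomain F4 := NoZeroDivisors.to_isDomain _

noncomputable instance : Field F4 := Fintype.fieldOfDomain F4

theorem card_eq : Fintype.card F4 = 4 := by decide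

end F4

open Matrix

namespace F4SL

/-- Representatives of the five points of the projective line over `F4`. -/
def pts : Fin 5 → (Fin 2 → F4) :=
  ![![1, 0], ![0, 1], ![1, 1], ![1, F4.a], ![1, F4.b]]

/-- Index of the projective class of a nonzero vector. -/
def idx (v : Fin 2 → F4) : Fin 5 :=
  if v 0 = 0 then 1
  else if v 1 = 0 then 0
  else if v 1 = v 0 then 2
  else if v 1 = v 0 * F4.a then 3
  else 4

/-- The action of a matrix on the projective line. -/
def act (M : Matrix (Fin 2) (Fin 2) F4) (i : Fin 5) : Fin 5 :=
  idx (M.mulVec (pts i))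

theorem L1 : ∀ v : Fin 2 → F4, v ≠ 0 → ∃ c : F4, c ≠ 0 ∧ pts (idx v) = c • v := by decide

theorem L2 : ∀ c : F4, c ≠ 0 → ∀ v : Fin 2 → F4, idx (c • v) = idx v := by decide

theorem L3 : ∀ i : Fin 5, idx (pts i) = i := by decide

theorem L4 : ∀ i : Fin 5, pts i ≠ 0 := by decide

end F4SL

namespace F4SL

abbrev SL := Matrix.SpecialLinearGroup (Fin 2) F4

theorem mulVec_ne_zero (A : SL) {v : Fin 2 → F4} (hv : v ≠ 0) : A.val.mulVec v ≠ 0 := by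
  intro h
  apply hv
  have : (A⁻¹ * A).val.mulVec v = 0 := by
    rw [Matrix.SpecialLinearGroup.coe_mul, ← Matrix.mulVec_mulVec, h, Matrix.mulVec_zero]
  rwa [inv_mul_cancel, Matrix.SpecialLinearGroup.coe_one, Matrix.one_mulVec] at this

theorem act_mul (A B : SL) (i : Fin 5) : act (A * B).val i = act A.val (act B.val i) := by
  have hw : B.val.mulVec (pts i) ≠ 0 := mulVec_ne_zero B (L4 i)
  obtain ⟨c, hc, hpc⟩ := L1 _ hw
  rw [act, act, act, hpc, Matrix.mulVec_smul, L2 c hc,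
    Matrix.SpecialLinearGroup.coe_mul, ← Matrix.mulVec_mulVec]

theorem act_one (i : Fin 5) : act (1 : SL).val i = i := by
  rw [act, Matrix.SpecialLinearGroup.coe_one, Matrix.one_mulVec, L3]

/-- The permutation of the projective line induced by an element of `SL(2, F4)`. -/
def perm (A : SL) : Equiv.Perm (Fin 5) where
  toFun := act A.val
  invFun := act A⁻¹.val
  left_inv i := by rw [← act_mul, inv_mul_cancel, act_one]
  right_inv i := by rw [← act_mul, mul_inv_cancel, act_one]

/-- The homomorphism `SL(2, F4) →* Perm (Fin 5)`. -/
def f : SL →* Equiv.Perm (Fin 5) :=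
  MonoidHom.mk' perm (fun A B => Equiv.ext fun i => act_mul A B i)

theorem L5 : ∀ p q r s : F4, p * s - q * r = 1 →
    (∀ i, act !![p, q; r, s] i = i) → !![p, q; r, s] = 1 := by decide

theorem f_injective : Function.Injective f := by
  rw [injective_iff_map_eq_one]
  intro A hA
  have hact : ∀ i, act A.val i = i := fun i => congrFun (congrArg Equiv.toFun (by exact_mod_cast hA)) i
  have hdet : A.val 0 0 * A.val 1 1 - A.val 0 1 * A.val 1 0 = 1 := by
    rw [← Matrix.det_fin_two]; exact A.2
  have heta := Matrix.eta_fin_two A.val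
  have := L5 _ _ _ _ hdet (fun i => by rw [← heta]; exact hact i)
  ext : 1
  rw [heta, this, Matrix.SpecialLinearGroup.coe_one]

end F4SL

namespace F4SL

abbrev Quad := {x : F4 × F4 × F4 × F4 // x.1 * x.2.2.2 - x.2.1 * x.2.2.1 = 1}

theorem card_quad : Fintype.card Quad = 60 := by decide

/-- `SL(2,F4)` is equivalent to the set of quadruples with determinant one. -/
def slEquivQuad : SL ≃ Quad where
  toFun A := ⟨(A.val 0 0, A.val 0 1, A.val 1 0, A.val 1 1), by
    have := A.2; rwa [Matrix.det_fin_two] at this⟩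
  invFun x := ⟨!![x.1.1, x.1.2.1; x.1.2.2.1, x.1.2.2.2], by
    rw [Matrix.det_fin_two_of]; exact x.2⟩
  left_inv A := Subtype.ext (Matrix.eta_fin_two A.val).symm
  right_inv x := rfl

theorem card_SL : Nat.card SL = 60 := by
  rw [Nat.card_eq_fintype_card, Fintype.card_congr slEquivQuad, card_quad]

theorem card_range : Nat.card f.range = 60 :=
  (Nat.card_congr (MonoidHom.ofInjective f_injective).toEquiv).symm.trans card_SL

theorem range_index : f.range.index = 2 := by
  have h := f.range.index_mul_card
  rw [card_range, Nat.card_eq_fintype_card, Fintype.card_perm, Fintype.card_fin, show Nat.factorial 5 = 120 from rfl] at h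
  omega

theorem range_eq : f.range = alternatingGroup (Fin 5) := by
  refine (Subgroup.eq_of_le_of_card_ge ?_ ?_).symm
  · rw [← Equiv.Perm.closure_three_cycles_eq_alternating]
    rw [Subgroup.closure_le]
    intro σ hσ
    have h3 : σ ^ 3 = 1 := by
      rw [← Equiv.Perm.IsThreeCycle.orderOf hσ]; exact pow_orderOf_eq_one σ
    have : σ = (σ ^ 2) * (σ ^ 2) := by
      rw [← pow_add]
      have : σ ^ 4 = σ := by
        rw [show (4 : ℕ) = 3 + 1 by rfl, pow_add, h3, one_mul, pow_one]
      rw [show (2 + 2 : ℕ) = 4 by rfl, this]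
    rw [this]
    exact Subgroup.mul_self_mem_of_index_two range_index _
  · rw [card_range]
    have h := @two_mul_card_alternatingGroup (Fin 5) _ _ _
    rw [Fintype.card_perm, Fintype.card_fin, show Nat.factorial 5 = 120 from rfl] at h
    rw [Nat.card_eq_fintype_card]
    omega

/-- `SL(2, F4)` is isomorphic to the alternating group on five letters. -/
noncomputable def slMulEquivAlternating : SL ≃* alternatingGroup (Fin 5) :=
  (MonoidHom.ofInjective f_injective).trans (MulEquiv.subgroupCongr range_eq)

end F4SL

/-- Transport of the special linear group along a ring isomorphism. -/
def slCongr {R S : Type} [CommRing R] [CommRing S] (ψ : R ≃+* S) :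
    Matrix.SpecialLinearGroup (Fin 2) R ≃* Matrix.SpecialLinearGroup (Fin 2) S where
  toFun := Matrix.SpecialLinearGroup.map ψ.toRingHom
  invFun := Matrix.SpecialLinearGroup.map ψ.symm.toRingHom
  left_inv A := Subtype.ext <| by
    ext i j
    simp [Matrix.SpecialLinearGroup.map, Matrix.map_apply]
    exact ψ.symm_apply_apply (A.1 i j)
  right_inv A := Subtype.ext <| by
    ext i j
    simp [Matrix.SpecialLinearGroup.map, Matrix.map_apply]
    exact ψ.apply_symm_apply (A.1 i j)
  map_mul' := map_mul _

theorem center_eq_bot :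
    Subgroup.center (Matrix.SpecialLinearGroup (Fin 2) (GaloisField 2 2)) = ⊥ := by
  rw [eq_bot_iff]
  intro A hA
  obtain ⟨r, hr, hsc⟩ := Matrix.SpecialLinearGroup.mem_center_iff.mp hA
  rw [Fintype.card_fin] at hr
  have h2 : (2 : GaloisField 2 2) = 0 := by
    have := CharP.cast_eq_zero (GaloisField 2 2) 2
    exact_mod_cast this
  have hr1 : r = 1 := by
    have hsq : (r - 1) ^ 2 = 0 := by linear_combination hr + (1 - r) * h2
    have := pow_eq_zero_iff (n := 2) (by norm_num) |>.mp hsq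
    exact sub_eq_zero.mp this
  rw [Subgroup.mem_bot]
  exact Subtype.ext (by rw [← hsc, hr1]; simp)

theorem psl_two_four_iso_alternating_five' :
    Nonempty ((Matrix.SpecialLinearGroup (Fin 2) (GaloisField 2 2) ⧸
      Subgroup.center (Matrix.SpecialLinearGroup (Fin 2) (GaloisField 2 2)))
      ≃* alternatingGroup (Fin 5)) := by
  haveI : Fintype (GaloisField 2 2) := Fintype.ofFinite _
  have hcard : Fintype.card (GaloisField 2 2) = Fintype.card F4 := by
    rw [F4.card_eq, ← Nat.card_eq_fintype_card,
      GaloisField.card (p := 2) (n := 2) (by norm_num)]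
    norm_num
  exact ⟨((QuotientGroup.quotientMulEquivOfEq center_eq_bot).trans
    QuotientGroup.quotientBot).trans
    ((slCongr (FiniteField.ringEquivOfCardEq hcard)).trans F4SL.slMulEquivAlternating)⟩

/-- The groups `PSL(2, 𝔽_4)` and `A_5` are isomorphic. -/
theorem psl_two_four_iso_alternating_five :
    Nonempty (PSL 2 (GaloisField 2 2) ≃* alternatingGroup (Fin 5)) := by
  exact psl_two_four_iso_alternating_five'
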